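/- For positive integers p, q, the polynomial ∑_{i=0}^{min(p,q)} 4^i C(p,i) C(q,i) x^i has only real roots. -/

import Mathlib

open Polynomial Finset

/-- The γ-polynomial of the h*-polynomial of `B_{K_{p,q}}`. -/
noncomputable def gammaKpq (p q : ℕ) : Polynomial ℝ :=
  ∑ i ∈ Finset.range (min p q + 1), C ((4 : ℝ) ^ i * p.choose i * q.choose i) * X ^ i

namespace GammaKpqAux

/-- Auxiliary polynomial `∑ C(p,i) C(q+i,i) X^i`, which equals
`(1/q!) dⁿ/dxⁿ [x^q (x+1)^p]` for `n = q`. -/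
noncomputable def Rpoly (p q : ℕ) : Polynomial ℝ :=
  ∑ i ∈ Finset.range (p + 1), C ((p.choose i : ℝ) * ((q + i).choose i : ℝ)) * X ^ i

lemma key_nat (p q : ℕ) {n : ℕ} (hn : n ≤ p) :
    ∑ i ∈ Finset.range (n + 1), p.choose i * q.choose i * ((p - i).choose (n - i))
      = p.choose n * (q + n).choose n := by
  rw [Nat.add_choose_eq, Finset.Nat.sum_antidiagonal_eq_sum_range_succ_mk, Finset.mul_sum]
  refine Finset.sum_congr rfl fun i hi => ?_
  rw [Finset.mem_range, Nat.lt_succ_iff] at hi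
  rw [Nat.choose_symm hi,
    show p.choose n * (q.choose i * n.choose i) = q.choose i * (p.choose n * n.choose i) from by
      ring,
    Nat.choose_mul (n := p) hi]
  ring

lemma claim1 (p q : ℕ) (w : ℂ) :
    ∑ i ∈ Finset.range (p + 1),
        (p.choose i : ℂ) * (q.choose i : ℂ) * w ^ i * (1 + w) ^ (p - i)
      = ∑ n ∈ Finset.range (p + 1), (p.choose n : ℂ) * ((q + n).choose n : ℂ) * w ^ n := by
  have h1 : ∀ i ∈ Finset.range (p + 1),
      (p.choose i : ℂ) * (q.choose i : ℂ) * w ^ i * (1 + w) ^ (p - i)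
        = ∑ j ∈ Finset.range (p + 1 - i),
            (p.choose i : ℂ) * (q.choose i : ℂ) * ((p - i).choose j : ℂ) * w ^ (i + j) := by
    intro i hi
    rw [Finset.mem_range, Nat.lt_succ_iff] at hi
    have hr : p + 1 - i = p - i + 1 := by omega
    rw [add_comm (1 : ℂ) w, add_pow, hr, Finset.mul_sum]
    refine Finset.sum_congr rfl fun j hj => ?_
    rw [one_pow, pow_add]
    ring
  rw [Finset.sum_congr rfl h1, ← Finset.sum_range_diag_flip (p + 1)
      (fun i j => (p.choose i : ℂ) * (q.choose i : ℂ) * ((p - i).choose j : ℂ) * w ^ (i + j))]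
  refine Finset.sum_congr rfl fun n hn => ?_
  rw [Finset.mem_range, Nat.lt_succ_iff] at hn
  have h2 : ∀ k ∈ Finset.range (n + 1),
      (p.choose k : ℂ) * (q.choose k : ℂ) * ((p - k).choose (n - k) : ℂ) * w ^ (k + (n - k))
        = ((p.choose k * q.choose k * ((p - k).choose (n - k)) : ℕ) : ℂ) * w ^ n := by
    intro k hk
    rw [Finset.mem_range, Nat.lt_succ_iff] at hk
    rw [Nat.add_sub_cancel' hk]
    push_cast
    ring
  rw [Finset.sum_congr rfl h2, ← Finset.sum_mul, ← Nat.cast_sum, key_nat p q hn]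
  push_cast
  ring

lemma map_eval_R (p q : ℕ) (w : ℂ) :
    ((Rpoly p q).map (algebraMap ℝ ℂ)).eval w
      = ∑ i ∈ Finset.range (p + 1), (p.choose i : ℂ) * ((q + i).choose i : ℂ) * w ^ i := by
  simp only [Rpoly, Polynomial.map_sum, Polynomial.map_mul, Polynomial.map_pow, map_C, map_X,
    eval_finset_sum, eval_mul, eval_pow, eval_C, eval_X]
  refine Finset.sum_congr rfl fun i _ => ?_
  push_cast
  simp [map_mul, map_natCast]

lemma f0_eq (p q : ℕ) :
    (X ^ q * (X + 1) ^ p : ℝ[X]) = ∑ i ∈ Finset.range (p + 1), C ((p.choose i : ℝ)) * X ^ (q + i) := by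
  rw [add_pow, Finset.mul_sum]
  refine Finset.sum_congr rfl fun i hi => ?_
  rw [one_pow, pow_add]
  rw [Polynomial.C_eq_natCast]
  ring

lemma deriv_f0 (p q : ℕ) :
    derivative^[q] (X ^ q * (X + 1) ^ p : ℝ[X]) = C ((q.factorial : ℝ)) * Rpoly p q := by
  rw [f0_eq, Polynomial.iterate_derivative_sum, Rpoly, Finset.mul_sum]
  refine Finset.sum_congr rfl fun i _ => ?_
  rw [Polynomial.iterate_derivative_C_mul, Polynomial.iterate_derivative_X_pow_eq_C_mul,
    Nat.add_sub_cancel_left]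
  rw [show (q + i).descFactorial q = q.factorial * ((q + i).choose i) from by
    rw [Nat.descFactorial_eq_factorial_mul_choose, Nat.choose_symm_add]]
  have hcast : (p.choose i : ℝ) * ((q.factorial * ((q + i).choose i) : ℕ) : ℝ)
      = (q.factorial : ℝ) * ((p.choose i : ℝ) * ((q + i).choose i : ℝ)) := by push_cast; ring
  rw [← mul_assoc, ← C_mul, hcast, C_mul]
  ring

lemma rr_step (f : ℝ[X]) (h : Multiset.card f.roots = f.natDegree) :
    Multiset.card (derivative f).roots = (derivative f).natDegree := by
  by_cases h0 : f.natDegree = 0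
  · rw [derivative_of_natDegree_zero h0]
    simp
  · have h1 := Polynomial.card_roots_le_derivative f
    have h2 : (derivative f).natDegree ≤ f.natDegree - 1 := natDegree_derivative_le f
    have h3 := Polynomial.card_roots' (derivative f)
    omega

lemma rr_iter (f : ℝ[X]) (h : Multiset.card f.roots = f.natDegree) (k : ℕ) :
    Multiset.card (derivative^[k] f).roots = (derivative^[k] f).natDegree := by
  induction k with
  | zero => simpa
  | succ n ih => rw [Function.iterate_succ_apply']; exact rr_step _ ih

lemma real_roots_only (f : ℝ[X]) (hf : f ≠ 0) (h : Multiset.card f.roots = f.natDegree)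
    {z : ℂ} (hz : (f.map (algebraMap ℝ ℂ)).eval z = 0) : z.im = 0 := by
  have hsplit : f.Splits := (Polynomial.splits_iff_card_roots).mpr h
  have hmapne : f.map (algebraMap ℝ ℂ) ≠ 0 :=
    (Polynomial.map_ne_zero_iff (algebraMap ℝ ℂ).injective).mpr hf
  have hz' : z ∈ (f.map (algebraMap ℝ ℂ)).roots := by
    rw [Polynomial.mem_roots hmapne]
    exact hz
  rw [hsplit.roots_map _] at hz'
  obtain ⟨r, hr, rfl⟩ := Multiset.mem_map.mp hz'
  simp

lemma f0_rr (p q : ℕ) :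
    Multiset.card (X ^ q * (X + 1) ^ p : ℝ[X]).roots
      = (X ^ q * (X + 1) ^ p : ℝ[X]).natDegree := by
  have h1 : ((X : ℝ[X]) + 1) = X - C (-1) := by simp
  have hX : (X : ℝ[X]) ^ q ≠ 0 := pow_ne_zero _ X_ne_zero
  have hX1 : ((X : ℝ[X]) + 1) ≠ 0 := by
    rw [h1]
    exact X_sub_C_ne_zero (-1)
  have hX1p : ((X : ℝ[X]) + 1) ^ p ≠ 0 := pow_ne_zero _ hX1
  rw [Polynomial.roots_mul (mul_ne_zero hX hX1p), Polynomial.roots_pow, Polynomial.roots_pow,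
    Polynomial.natDegree_mul hX hX1p, Polynomial.natDegree_pow, Polynomial.natDegree_pow,
    roots_X, h1, roots_X_sub_C, natDegree_X, natDegree_X_sub_C]
  simp

lemma Rpoly_ne_zero (p q : ℕ) : Rpoly p q ≠ 0 := by
  intro h
  have h0 : (Rpoly p q).coeff 0 = 1 := by
    rw [Rpoly]
    rw [Polynomial.finset_sum_coeff]
    rw [Finset.sum_eq_single 0]
    · simp
    · intro i _ hi
      simp [coeff_C_mul, coeff_X_pow, Ne.symm hi]
    · intro hh
      simp at hh
  rw [h] at h0
  simp at h0

theorem RR_R (p q : ℕ) {w : ℂ}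
    (hw : ∑ i ∈ Finset.range (p + 1), (p.choose i : ℂ) * ((q + i).choose i : ℂ) * w ^ i = 0) :
    w.im = 0 := by
  set g : ℝ[X] := derivative^[q] (X ^ q * (X + 1) ^ p : ℝ[X]) with hg
  have hgR : g = C ((q.factorial : ℝ)) * Rpoly p q := deriv_f0 p q
  have hgne : g ≠ 0 := by
    rw [hgR]
    exact mul_ne_zero (by
      simp [Nat.factorial_ne_zero, C_eq_zero]) (Rpoly_ne_zero p q)
  have hrr : Multiset.card g.roots = g.natDegree := rr_iter _ (f0_rr p q) q
  refine real_roots_only g hgne hrr (z := w) ?_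
  rw [hgR, Polynomial.map_mul, map_C, eval_mul, eval_C, map_eval_R, hw]
  ring

end GammaKpqAux

open GammaKpqAux in
/-- `∑_i 4^i C(p,i) C(q,i) x^i` has only real roots. -/
theorem stmt2 (p q : ℕ) (hp : 0 < p) (hq : 0 < q) :
    ∀ z : ℂ, ((gammaKpq p q).map (algebraMap ℝ ℂ)).eval z = 0 → z.im = 0 := by
  intro z hz
  by_contra him
  set u : ℂ := 4 * z with hu
  have hiu : u.im ≠ 0 := by
    rw [hu]
    simp only [Complex.mul_im]
    norm_num
    exact him
  have hu1 : (1 : ℂ) - u ≠ 0 := by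
    intro h
    apply hiu
    have : u = 1 := by linear_combination -h
    rw [this]
    simp
  set v : ℂ := 1 - u with hv
  set w : ℂ := u / v with hw
  have h1w : 1 + w = 1 / v := by
    rw [hw]
    field_simp
    linear_combination -hv
  -- eval of gammaKpq at z as a sum over range (p+1)
  have hS1 : ∑ i ∈ Finset.range (p + 1), (p.choose i : ℂ) * (q.choose i : ℂ) * u ^ i = 0 := by
    have hext : ∑ i ∈ Finset.range (p + 1), (p.choose i : ℂ) * (q.choose i : ℂ) * u ^ i
        = ∑ i ∈ Finset.range (min p q + 1), (p.choose i : ℂ) * (q.choose i : ℂ) * u ^ i := by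
      refine (Finset.sum_subset (Finset.range_subset_range.mpr (by omega)) ?_).symm
      intro i hi hni
      rw [Finset.mem_range] at hi
      rw [Finset.mem_range] at hni
      have hqi : q < i := by omega
      simp [Nat.choose_eq_zero_of_lt hqi]
    rw [hext]
    rw [← hz]
    rw [gammaKpq, Polynomial.map_sum]
    simp only [Polynomial.map_mul, Polynomial.map_pow, map_C, map_X, eval_finset_sum, eval_mul,
      eval_pow, eval_C, eval_X]
    refine Finset.sum_congr rfl fun i _ => ?_
    rw [hu]
    push_cast
    ring
  -- transform to a sum in w
  have hterm : ∀ i ∈ Finset.range (p + 1),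
      (p.choose i : ℂ) * (q.choose i : ℂ) * u ^ i
        = ((p.choose i : ℂ) * (q.choose i : ℂ) * w ^ i * (1 + w) ^ (p - i)) * v ^ p := by
    intro i hi
    rw [Finset.mem_range, Nat.lt_succ_iff] at hi
    have hvp : v ^ p = v ^ (p - i) * v ^ i := by rw [← pow_add, Nat.sub_add_cancel hi]
    rw [h1w, hvp, hw, div_pow, div_pow, one_pow]
    have hvi : v ^ i ≠ 0 := pow_ne_zero _ hu1
    have hvpi : v ^ (p - i) ≠ 0 := pow_ne_zero _ hu1
    field_simp
  have hS2 : (∑ i ∈ Finset.range (p + 1),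
      (p.choose i : ℂ) * ((q + i).choose i : ℂ) * w ^ i) * v ^ p = 0 := by
    rw [← claim1 p q w, Finset.sum_mul, ← Finset.sum_congr rfl hterm]
    exact hS1
  have hS3 : ∑ i ∈ Finset.range (p + 1),
      (p.choose i : ℂ) * ((q + i).choose i : ℂ) * w ^ i = 0 := by
    rcases mul_eq_zero.mp hS2 with h | h
    · exact h
    · exact absurd h (pow_ne_zero _ hu1)
  have hwim : w.im = 0 := RR_R p q hS3
  -- derive contradiction
  have hE : w * (1 - u) = u := by
    rw [hw, ← hv]
    exact div_mul_cancel₀ u hu1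
  have huw : u * (1 + w) = w := by linear_combination -hE
  have h1w0 : (1 : ℂ) + w ≠ 0 := by
    rw [h1w]
    exact one_div_ne_zero hu1
  have him1w : (1 + w).im = 0 := by
    simp [Complex.add_im, hwim]
  have hre : u.im * (1 + w).re = 0 := by
    have := congrArg Complex.im huw
    rw [Complex.mul_im, him1w, hwim] at this
    linarith [this]
  rcases mul_eq_zero.mp hre with h | h
  · exact hiu h
  · apply h1w0
    apply Complex.ext
    · simpa using h
    · simpa using him1w
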